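/- S-holomorphicity implies closedness of the square-differential: let z, z₁, z₂, z₃, z₄ be the center and corners of a lattice cell, with adjacent squares u_I, v_λ̄, u_R, v_λ carrying projection directions i, λ̄, 1, λ respectively (λ = e^{iπ/4}). If a complex number W satisfies the s-holomorphicity relations F(u_R) = Proj₁(W) = Re(W), F(u_I) = Proj_i(W) = i·Im(W), F(v_λ) = Proj_λ(W), F(v_λ̄) = Proj_{λ̄}(W), where Proj_τ(z) = τ·Re(z·conj(τ)), then |W|² = F(u_R)² − F(u_I)² = i·(F(v_λ̄)² − F(v_λ)²). Consequently the increments of H defined by H(z₂) − H(z₁) = (F(a))²·(z₂ − z₁) over the four faces around the cell sum to zero. -/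

import Mathlib

open Complex ComplexConjugate

/-- λ = e^{iπ/4} -/
noncomputable def lam : ℂ := Complex.exp ((Real.pi : ℂ) * Complex.I / 4)

/-- Projection onto the direction `τ`: `Proj_τ(z) = τ·Re(z·conj τ)`. -/
noncomputable def Proj (τ z : ℂ) : ℂ := τ * ((z * conj τ).re : ℂ)

/-- Explicit value of `λ`. -/
lemma hlam : lam = (Real.sqrt 2 / 2 : ℝ) * (1 + Complex.I) := by
  have h : ((Real.pi : ℂ) * Complex.I / 4) = ((Real.pi/4 : ℝ) : ℂ) * Complex.I := by
    push_cast; ring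
  rw [lam, h, Complex.exp_mul_I, ← Complex.ofReal_cos, ← Complex.ofReal_sin,
    Real.cos_pi_div_four, Real.sin_pi_div_four]
  ring

/-- S-holomorphicity implies closedness of the square differential: for any `W ∈ ℂ`,
`|W|² = (Proj₁ W)² − (Proj_i W)² = i·((Proj_λ̄ W)² − (Proj_λ W)²)`; consequently the increments
`H(z₂) − H(z₁) = (F(a))²·(z₂ − z₁)` of the primitive `H` around the four faces of a lattice cell
(with corners `z ± t`, `z ± t·i` and face values the projections of the vertex value `W` in the
directions `1, λ, i, λ̄`) sum to zero. -/
theorem stmt10 (W : ℂ) :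
    ((‖W‖ : ℝ) : ℂ) ^ 2 = (Proj 1 W) ^ 2 - (Proj Complex.I W) ^ 2 ∧
    ((‖W‖ : ℝ) : ℂ) ^ 2
      = Complex.I * ((Proj (conj lam) W) ^ 2 - (Proj lam W) ^ 2) ∧
    ∀ z t : ℂ,
      (Proj 1 W) ^ 2 * ((z + t * Complex.I) - (z + t))
        + (Proj lam W) ^ 2 * ((z - t) - (z + t * Complex.I))
        + (Proj Complex.I W) ^ 2 * ((z - t * Complex.I) - (z - t))
        + (Proj (conj lam) W) ^ 2 * ((z + t) - (z - t * Complex.I)) = 0 := by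
  set a := W.re
  set b := W.im
  have h2c : ((Real.sqrt 2 : ℝ) : ℂ)^2 = 2 := by
    norm_cast; exact Real.sq_sqrt (by norm_num)
  have hconjlam : conj lam = ((Real.sqrt 2 / 2 : ℝ) : ℂ) * (1 - Complex.I) := by
    rw [hlam, map_mul, Complex.conj_ofReal, map_add, map_one, Complex.conj_I]; ring
  have hlam2 : lam ^ 2 = Complex.I := by
    rw [hlam, mul_pow]
    push_cast
    linear_combination ((1 + 2*Complex.I + Complex.I^2)/4) * h2c + Complex.I_sq/2
  have hclam2 : (conj lam) ^ 2 = -Complex.I := by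
    rw [← map_pow, hlam2, Complex.conj_I]
  have habs : ((‖W‖ : ℝ) : ℂ)^2 = ((a:ℂ))^2 + ((b:ℂ))^2 := by
    rw [← Complex.ofReal_pow, Complex.sq_norm, Complex.normSq_apply]; push_cast; ring
  have h1 : Proj 1 W = (a:ℂ) := by simp [Proj, a]
  have hI : Proj Complex.I W = Complex.I * (b:ℂ) := by
    simp [Proj, Complex.mul_re, b]
  have hc : (W * conj lam).re = (Real.sqrt 2 / 2) * (a + b) := by
    rw [hconjlam]
    simp [Complex.mul_re, Complex.sub_re, Complex.sub_im, Complex.mul_im]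
    ring
  have hd : (W * conj (conj lam)).re = (Real.sqrt 2 / 2) * (a - b) := by
    rw [Complex.conj_conj, hlam]
    simp [Complex.mul_re, Complex.add_re, Complex.add_im, Complex.mul_im]
    ring
  have hPl : (Proj lam W)^2 = Complex.I * (((a:ℂ)+b)^2 / 2) := by
    rw [Proj, mul_pow, hlam2, hc]
    push_cast
    linear_combination (Complex.I * ((a:ℂ)+b)^2 / 4) * h2c
  have hPc : (Proj (conj lam) W)^2 = -Complex.I * (((a:ℂ)-b)^2 / 2) := by
    rw [Proj, mul_pow, hclam2, hd]
    push_cast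
    linear_combination (-Complex.I * ((a:ℂ)-b)^2 / 4) * h2c
  have key1 : ((‖W‖ : ℝ) : ℂ)^2 = (Proj 1 W) ^ 2 - (Proj Complex.I W) ^ 2 := by
    rw [habs, h1, hI]
    linear_combination ((b:ℂ)^2) * Complex.I_sq
  have key2 : ((‖W‖ : ℝ) : ℂ)^2
      = Complex.I * ((Proj (conj lam) W) ^ 2 - (Proj lam W) ^ 2) := by
    rw [habs, hPl, hPc]
    linear_combination (((a:ℂ)^2 + (b:ℂ)^2)) * Complex.I_sq
  refine ⟨key1, key2, fun z t => ?_⟩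
  have e2 : (Proj (conj lam) W) ^ 2 - (Proj lam W) ^ 2
      = -Complex.I * ((‖W‖ : ℝ) : ℂ)^2 := by
    linear_combination Complex.I * key2
      + ((Proj (conj lam) W) ^ 2 - (Proj lam W) ^ 2) * Complex.I_sq
  linear_combination (t * Complex.I - t) * key1.symm + (t + t * Complex.I) * e2
    + (-t * ((‖W‖ : ℝ) : ℂ)^2) * Complex.I_sq
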